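/- For every nonzero real t, the infinite product ∏_{m=1}^{∞} cos(t/2^m) converges to sin(t)/t (Viète's formula). -/
import Mathlib


open Filter

lemma sin_ne_zero_of_abs_lt_pi {x : ℝ} (hx : x ≠ 0) (h : |x| < Real.pi) :
    Real.sin x ≠ 0 := by
  rcases lt_or_gt_of_ne hx with h1 | h1
  · have : Real.sin (-x) > 0 := Real.sin_pos_of_pos_of_lt_pi (by linarith)
      (by rw [abs_of_neg h1] at h; linarith)
    rw [Real.sin_neg] at this; intro h0; rw [h0] at this; simp at this
  · have : Real.sin x > 0 := Real.sin_pos_of_pos_of_lt_pi h1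
      (by rw [abs_of_pos h1] at h; linarith)
    exact ne_of_gt this

theorem viete_formula (t : ℝ) (ht : t ≠ 0) :
    Tendsto (fun M : ℕ => ∏ m ∈ Finset.Icc 1 M, Real.cos (t / 2 ^ m)) atTop
      (nhds (Real.sin t / t)) := by
  have key : ∀ M : ℕ, Real.sin (t / 2 ^ M) * ∏ m ∈ Finset.Icc 1 M, Real.cos (t / 2 ^ m)
      = Real.sin t / 2 ^ M := by
    intro M
    induction M with
    | zero => simp
    | succ M ih =>
      rw [Finset.prod_Icc_succ_top (by omega)]
      have h2 : Real.sin (t / 2 ^ M)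
          = 2 * Real.sin (t / 2 ^ (M + 1)) * Real.cos (t / 2 ^ (M + 1)) := by
        rw [← Real.sin_two_mul]
        congr 1
        field_simp
        ring
      have h3 : Real.sin (t / 2 ^ (M + 1)) *
          ((∏ m ∈ Finset.Icc 1 M, Real.cos (t / 2 ^ m)) * Real.cos (t / 2 ^ (M + 1)))
          = (Real.sin (t / 2 ^ M) * ∏ m ∈ Finset.Icc 1 M, Real.cos (t / 2 ^ m)) / 2 := by
        rw [h2]; ring
      rw [h3, ih]
      rw [pow_succ]
      ring
  -- x M := t / 2^M tends to 0 within ≠ 0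
  have hx0 : ∀ M : ℕ, t / 2 ^ M ≠ 0 := fun M =>
    div_ne_zero ht (by positivity)
  have hxlim : Tendsto (fun M : ℕ => t / 2 ^ M) atTop (nhds 0) := by
    have : Tendsto (fun M : ℕ => t * (1 / 2 : ℝ) ^ M) atTop (nhds (t * 0)) :=
      Tendsto.const_mul t (tendsto_pow_atTop_nhds_zero_of_lt_one (by norm_num) (by norm_num))
    simpa [div_eq_mul_inv, inv_pow] using this
  have hxlim' : Tendsto (fun M : ℕ => t / 2 ^ M) atTop (nhdsWithin 0 {0}ᶜ) :=
    tendsto_nhdsWithin_of_tendsto_nhds_of_eventually_within _ hxlim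
      (Eventually.of_forall fun M => hx0 M)
  -- slope of sin at 0 tends to 1
  have hslope : Tendsto (slope Real.sin 0) (nhdsWithin 0 {0}ᶜ) (nhds 1) := by
    have := (Real.hasDerivAt_sin 0)
    rw [hasDerivAt_iff_tendsto_slope] at this
    simpa using this
  have hcomp : Tendsto (fun M : ℕ => Real.sin (t / 2 ^ M) / (t / 2 ^ M)) atTop (nhds 1) := by
    have := hslope.comp hxlim'
    refine this.congr fun M => ?_
    simp [slope, Function.comp, div_eq_mul_inv]
    ring
  -- main limit of the auxiliary expression
  have hmain : Tendsto (fun M : ℕ => Real.sin t / t *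
      (Real.sin (t / 2 ^ M) / (t / 2 ^ M))⁻¹) atTop (nhds (Real.sin t / t)) := by
    have := (tendsto_const_nhds (x := Real.sin t / t) (f := atTop (α := ℕ))).mul
      (hcomp.inv₀ (by norm_num))
    simpa using this
  -- eventually the product equals the auxiliary expression
  refine Tendsto.congr' ?_ hmain
  obtain ⟨N, hN⟩ := pow_unbounded_of_one_lt (|t| / Real.pi) (by norm_num : (1:ℝ) < 2)
  filter_upwards [eventually_ge_atTop N] with M hM
  have hpi : |t / 2 ^ M| < Real.pi := by
    rw [abs_div, abs_of_pos (by positivity : (0:ℝ) < (2:ℝ) ^ M)]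
    rw [div_lt_iff₀ (by positivity)]
    have h1 : |t| / Real.pi < 2 ^ N := hN
    have h2 : (2:ℝ) ^ N ≤ 2 ^ M := pow_le_pow_right₀ (by norm_num) hM
    have hπ : 0 < Real.pi := Real.pi_pos
    calc |t| = |t| / Real.pi * Real.pi := by field_simp
    _ < 2 ^ N * Real.pi := by exact mul_lt_mul_of_pos_right h1 hπ
    _ ≤ 2 ^ M * Real.pi := by nlinarith
    _ = Real.pi * 2 ^ M := by ring
  have hsin : Real.sin (t / 2 ^ M) ≠ 0 := sin_ne_zero_of_abs_lt_pi (hx0 M) hpi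
  have hk := key M
  have h2M : ((2:ℝ) ^ M) ≠ 0 := by positivity
  field_simp at hk ⊢
  linear_combination -hk
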